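/- For λ = (λ_1,...,λ_m) ∈ ℂ^m, the reverse operations satisfy r^{λ_*} = ((r^{-1})_*)^{-λ} and (r^{-1})^λ = (r_*)^{-λ_*} for all r in the cone Ω of positive definite symmetric m×m matrices. -/

import Mathlib

open MeasureTheory Matrix
open scoped Real ENNReal NNReal

noncomputable section

abbrev Mat (n m : ℕ) := Matrix (Fin n) (Fin m) ℝ

instance (n m : ℕ) : MeasurableSpace (Mat n m) :=
  inferInstanceAs (MeasurableSpace (Fin n → Fin m → ℝ))

/-- Lebesgue measure on the space of real `n × m` matrices. -/
def matVolume (n m : ℕ) : Measure (Mat n m) :=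
  (volume : Measure (Fin n → Fin m → ℝ))

/-- Symmetric matrix built from independent coordinates `(i,j)`, `i ≤ j`. -/
def symOfCoords (m : ℕ) (c : {p : Fin m × Fin m // p.1 ≤ p.2} → ℝ) :
    Matrix (Fin m) (Fin m) ℝ :=
  Matrix.of fun i j => if h : i ≤ j then c ⟨(i, j), h⟩ else c ⟨(j, i), (le_total i j).resolve_left h⟩

/-- Lebesgue measure `dr = ∏_{i ≤ j} dr_{i,j}` on symmetric `m × m` matrices. -/
def symMeasure (m : ℕ) : Measure (Matrix (Fin m) (Fin m) ℝ) :=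
  Measure.map (symOfCoords m) volume

/-- Siegel gamma function (complex argument). -/
def SiegelGamma (m : ℕ) (α : ℂ) : ℂ :=
  (Real.pi : ℂ) ^ (((m : ℂ) * ((m : ℂ) - 1)) / 4) *
    ∏ j ∈ Finset.range m, Complex.Gamma (α - (j : ℂ) / 2)

/-- Siegel gamma function (real argument). -/
def SiegelGammaR (m : ℕ) (α : ℝ) : ℝ :=
  Real.pi ^ (((m : ℝ) * ((m : ℝ) - 1)) / 4) *
    ∏ j ∈ Finset.range m, Real.Gamma (α - (j : ℝ) / 2)

/-- `i`-th leading principal minor. -/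
def pminor {m : ℕ} (s : Matrix (Fin m) (Fin m) ℝ) (i : ℕ) : ℝ :=
  (Matrix.of fun a b : Fin (min i m) =>
    s (Fin.castLE (min_le_right i m) a) (Fin.castLE (min_le_right i m) b)).det

/-- Composite power function `s^λ` of the cone of positive definite matrices. -/
def cpowCone {m : ℕ} (s : Matrix (Fin m) (Fin m) ℝ) (lam : Fin m → ℂ) : ℂ :=
  ∏ i : Fin m, ((pminor s ((i : ℕ) + 1) / pminor s (i : ℕ) : ℝ) : ℂ) ^ (lam i / 2)

/-- Gamma function of the cone, for composite parameters. -/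
def GammaOmega (m : ℕ) (lam : Fin m → ℂ) : ℂ :=
  (Real.pi : ℂ) ^ (((m : ℂ) * ((m : ℂ) - 1)) / 4) *
    ∏ j : Fin m, Complex.Gamma ((lam j - (j : ℂ)) / 2)

/-- The antidiagonal permutation matrix ω. -/
def antidiag (m : ℕ) : Matrix (Fin m) (Fin m) ℝ :=
  Matrix.of fun i j => if j = i.rev then 1 else 0

/-- `μ` is the invariant probability measure of the Stiefel manifold `V_{n,m}`,
realized as a measure on the ambient matrix space. -/
def IsStiefelMeasure (n m : ℕ) (μ : Measure (Mat n m)) : Prop :=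
  IsProbabilityMeasure μ ∧ μ {v : Mat n m | vᵀ * v = 1}ᶜ = 0 ∧
    ∀ g : Mat n n, gᵀ * g = 1 → Measure.map (fun v : Mat n m => g * v) μ = μ

/-- A family of measures realizing the Funk transform: `ν u` is the normalized
invariant measure on `{w ∈ V_{n,q} : uᵀ w = 0}`. -/
def IsFunkFamily (n p q : ℕ) (ν : Mat n p → Measure (Mat n q)) : Prop :=
  (∀ u, IsProbabilityMeasure (ν u)) ∧
  (∀ u : Mat n p, ν u {w : Mat n q | wᵀ * w = 1 ∧ uᵀ * w = 0}ᶜ = 0) ∧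
  (∀ g : Mat n n, gᵀ * g = 1 → ∀ u, Measure.map (fun w : Mat n q => g * w) (ν u) = ν (g * u))


/-- Vertical block matrix `[a; b]` of sizes `(n-m) × m` over `m × m`. -/
def vblock (n m : ℕ) (a : Matrix (Fin (n - m)) (Fin m) ℝ)
    (b : Matrix (Fin m) (Fin m) ℝ) : Mat n m :=
  Matrix.of fun i j =>
    if hi : (i : ℕ) < n - m then a ⟨(i : ℕ), hi⟩ j
    else b ⟨(i : ℕ) - (n - m), by omega⟩ j

/-- The block frame `[[a, 0], [0, I_m]]` of size `n × k`. -/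
def blockFrame (n m k : ℕ) (a : Matrix (Fin (n - m)) (Fin (k - m)) ℝ) :
    Mat n k :=
  Matrix.of fun i j =>
    if hi : (i : ℕ) < n - m then
      if hj : (j : ℕ) < k - m then a ⟨(i : ℕ), hi⟩ ⟨(j : ℕ), hj⟩ else 0
    else if (i : ℕ) - (n - m) = (j : ℕ) - (k - m) ∧ ¬ ((j : ℕ) < k - m) then 1 else 0

/-- The cosine kernel `det(vᵀ u uᵀ v)^{(α-k)/2}`. -/
def cosineKer (n m k : ℕ) (α : ℂ) (u : Mat n k) (v : Mat n m) : ℂ :=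
  (((vᵀ * u * uᵀ * v).det : ℝ) : ℂ) ^ ((α - (k : ℂ)) / 2)

/-- The sine transform `Q^α` on `V_{n,m}`. -/
def sineT (n m : ℕ) (μm : Measure (Mat n m)) (α : ℂ) (f : Mat n m → ℂ)
    (u : Mat n m) : ℂ :=
  ∫ v, f v * (((1 - vᵀ * u * uᵀ * v).det : ℝ) : ℂ) ^ ((α + (m : ℂ) - (n : ℂ)) / 2) ∂μm

/-- The sine transform `S^α_{m,k}` from `V_{n,m}` to `V_{n,k}`. -/
def sineS (n m k : ℕ) (μm : Measure (Mat n m)) (α : ℂ) (f : Mat n m → ℂ)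
    (u : Mat n k) : ℂ :=
  ∫ v, f v * (((1 - vᵀ * u * uᵀ * v).det : ℝ) : ℂ) ^ ((α + (k : ℂ) - (n : ℂ)) / 2) ∂μm

/-- The cosine transform `M^α` on `V_{n,m}`. -/
def cosM (n m : ℕ) (μm : Measure (Mat n m)) (α : ℂ) (f : Mat n m → ℂ)
    (w : Mat n m) : ℂ :=
  ∫ v, f v * (((vᵀ * w * wᵀ * v).det : ℝ) : ℂ) ^ ((α - (m : ℂ)) / 2) ∂μm

lemma antidiag_conj {m : ℕ} (s : Matrix (Fin m) (Fin m) ℝ) :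
    antidiag m * s * antidiag m = s.submatrix Fin.rev Fin.rev := by
  ext i j
  simp only [Matrix.mul_apply, antidiag, Matrix.of_apply, Matrix.submatrix_apply,
    ite_mul, mul_ite, one_mul, mul_one, zero_mul, mul_zero, Finset.sum_ite_eq',
    Finset.mem_univ, if_true]
  symm
  rw [Finset.sum_eq_single j.rev]
  · simp
  · intro x _ hx
    rw [if_neg]
    intro h; exact hx (by rw [h, Fin.rev_rev])
  · simp

lemma antidiag_mul_antidiag (m : ℕ) : antidiag m * antidiag m = 1 := by
  have := antidiag_conj (m := m) 1
  rwa [mul_one, Matrix.submatrix_one _ Fin.rev_injective] at this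

lemma pminor_eq {m : ℕ} (s : Matrix (Fin m) (Fin m) ℝ) {i : ℕ} (h : i ≤ m) :
    pminor s i = (s.submatrix (Fin.castLE h) (Fin.castLE h)).det := by
  unfold pminor
  rw [← Matrix.det_submatrix_equiv_self (finCongr (min_eq_left h) : Fin (min i m) ≃ Fin i)]
  congr 1

lemma posDef_submatrix {m a : ℕ} {r : Matrix (Fin m) (Fin m) ℝ} (hr : r.PosDef)
    (f : Fin a → Fin m) (hf : Function.Injective f) : (r.submatrix f f).PosDef := by
  refine Matrix.PosDef.of_dotProduct_mulVec_pos ?_ ?_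
  · have h1 := hr.1
    rw [Matrix.IsHermitian] at h1 ⊢
    rw [Matrix.conjTranspose_submatrix, h1]
  · intro x hx
    classical
    set y : Fin m → ℝ := fun j => ∑ b : Fin a, if f b = j then x b else 0 with hy
    have hyf : ∀ b, y (f b) = x b := by
      intro b
      simp only [hy]
      rw [Finset.sum_eq_single b]
      · simp
      · intro c _ hc
        simp only [hf.eq_iff]
        exact if_neg hc
      · simp
    have keysum : ∀ g : Fin m → ℝ, (∑ j, y j * g j) = ∑ b, x b * g (f b) := by
      intro g
      simp only [hy, Finset.sum_mul, ite_mul, zero_mul]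
      rw [Finset.sum_comm]
      exact Finset.sum_congr rfl fun b _ => (Finset.sum_ite_eq _ _ _).trans (by simp)
    have hy0 : y ≠ 0 := by
      obtain ⟨b, hb⟩ := Function.ne_iff.mp hx
      intro h0
      exact hb (by simpa [hyf b] using congrFun h0 (f b))
    have := hr.dotProduct_mulVec_pos hy0
    convert this using 1
    simp only [dotProduct, Matrix.mulVec, star, Matrix.submatrix_apply, id_eq]
    rw [keysum fun j => ∑ k, r j k * y k]
    refine Finset.sum_congr rfl fun b _ => ?_
    congr 1
    have : (∑ k, r (f b) k * y k) = ∑ k, y k * r (f b) k := by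
      exact Finset.sum_congr rfl fun k _ => mul_comm _ _
    rw [this, keysum fun k => r (f b) k]
    exact Finset.sum_congr rfl fun c _ => mul_comm _ _


lemma pminor_pos {m : ℕ} {s : Matrix (Fin m) (Fin m) ℝ} (hs : s.PosDef) (i : ℕ) :
    0 < pminor s i := by
  exact (posDef_submatrix hs (Fin.castLE (min_le_right i m))
    (Fin.castLE_injective _)).det_pos

lemma jacobi {m : ℕ} {r : Matrix (Fin m) (Fin m) ℝ} (hr : r.PosDef) {i : ℕ} (h : i ≤ m) :
    pminor r⁻¹ i * r.det = pminor (antidiag m * r * antidiag m) (m - i) := by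
  classical
  set b := m - i with hb
  set e : Fin i ⊕ Fin b ≃ Fin m := finSumFinEquiv.trans (finCongr (by omega)) with he
  set M : Matrix (Fin i ⊕ Fin b) (Fin i ⊕ Fin b) ℝ := r.submatrix e e with hM
  have hMdet : M.det = r.det := Matrix.det_submatrix_equiv_self e r
  set A := M.toBlocks₁₁; set B := M.toBlocks₁₂; set C := M.toBlocks₂₁; set D := M.toBlocks₂₂
  have hDpd : D.PosDef := by
    have : D = r.submatrix (fun p => e (Sum.inr p)) (fun p => e (Sum.inr p)) := rfl
    rw [this]
    exact posDef_submatrix hr _ (e.injective.comp Sum.inr_injective)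
  letI iD : Invertible D := D.invertibleOfIsUnitDet hDpd.det_pos.ne'.isUnit
  letI iM : Invertible M := M.invertibleOfIsUnitDet (by rw [hMdet]; exact hr.det_pos.ne'.isUnit)
  have hfb : Matrix.fromBlocks A B C D = M := Matrix.fromBlocks_toBlocks M
  letI iFB : Invertible (Matrix.fromBlocks A B C D) := hfb ▸ iM
  letI iS : Invertible (A - B * ⅟D * C) := Matrix.invertibleOfFromBlocks₂₂Invertible A B C D
  have hinv : ⅟(Matrix.fromBlocks A B C D) =
      Matrix.fromBlocks (⅟(A - B * ⅟D * C)) (-(⅟(A - B * ⅟D * C) * B * ⅟D))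
        (-(⅟D * C * ⅟(A - B * ⅟D * C))) (⅟D + ⅟D * C * ⅟(A - B * ⅟D * C) * B * ⅟D) :=
    Matrix.invOf_fromBlocks₂₂_eq A B C D
  -- det of top-left block of M⁻¹
  rw [Matrix.invOf_eq_nonsing_inv, hfb] at hinv
  have h11 : (M⁻¹).toBlocks₁₁ = ⅟(A - B * ⅟D * C) := by
    rw [hinv, Matrix.toBlocks_fromBlocks₁₁]
  have hMinv : M⁻¹ = r⁻¹.submatrix e e := Matrix.inv_submatrix_equiv r e e
  have hdetS : (A - B * ⅟D * C).det ≠ 0 :=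
    ((Matrix.isUnit_iff_isUnit_det _).mp (isUnit_of_invertible _)).ne_zero
  have hdetM : M.det = D.det * (A - B * ⅟D * C).det := by
    rw [← hfb]; exact Matrix.det_fromBlocks₂₂ A B C D
  -- identify pminor r⁻¹ i
  have hp1 : pminor r⁻¹ i = ((A - B * ⅟D * C).det)⁻¹ := by
    rw [pminor_eq r⁻¹ h]
    have : r⁻¹.submatrix (Fin.castLE h) (Fin.castLE h) = (M⁻¹).toBlocks₁₁ := by
      rw [hMinv]
      ext p q
      simp only [Matrix.toBlocks₁₁, Matrix.submatrix_apply, Matrix.of_apply]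
      congr 1 <;> exact Fin.ext (by simp [he])
    rw [this, h11, Matrix.invOf_eq_nonsing_inv, Matrix.det_nonsing_inv, Ring.inverse_eq_inv]
  -- identify pminor (ω r ω) (m - i)
  have hp2 : pminor (antidiag m * r * antidiag m) (m - i) = D.det := by
    rw [antidiag_conj, pminor_eq _ (Nat.sub_le m i), Matrix.submatrix_submatrix]
    have hD : D = r.submatrix (fun p => e (Sum.inr p)) (fun p => e (Sum.inr p)) := rfl
    rw [hD, ← Matrix.det_submatrix_equiv_self (Fin.revPerm : Equiv.Perm (Fin b)),
      Matrix.submatrix_submatrix]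
    congr 1
    ext p q
    simp only [Matrix.submatrix_apply, Function.comp]
    congr 1 <;>
      · apply Fin.ext
        simp [he, finSumFinEquiv, Fin.val_rev]
        omega
  rw [hp1, hp2, ← hMdet, hdetM, mul_comm D.det, ← mul_assoc,
    inv_mul_cancel₀ hdetS, one_mul]


lemma cpow_key {m : ℕ} (lam : Fin m → ℂ) {s : Matrix (Fin m) (Fin m) ℝ} (hs : s.PosDef) :
    cpowCone s⁻¹ lam
      = cpowCone (antidiag m * s * antidiag m) (fun j => -(lam j.rev)) := by
  set W := antidiag m * s * antidiag m with hWdef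
  have hW : W.PosDef := by
    rw [hWdef, antidiag_conj]
    exact posDef_submatrix hs _ Fin.rev_injective
  unfold cpowCone
  rw [← Equiv.prod_comp (Fin.revPerm : Equiv.Perm (Fin m))
    (fun i : Fin m => ((pminor W ((i : ℕ) + 1) / pminor W (i : ℕ) : ℝ) : ℂ) ^ (-(lam i.rev) / 2))]
  refine Finset.prod_congr rfl fun j _ => ?_
  have hjm : (j : ℕ) < m := j.isLt
  have hrr : (Fin.revPerm j).rev = j := by simp
  have hv : ((Fin.revPerm j : Fin m) : ℕ) = m - ((j : ℕ) + 1) := by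
    simp [Fin.val_rev]
  simp only [hrr, hv]
  have hv1 : m - ((j : ℕ) + 1) + 1 = m - (j : ℕ) := by omega
  rw [hv1]
  -- Jacobi identities
  have hA := jacobi hs (Nat.succ_le_of_lt hjm)
  have hB := jacobi hs (le_of_lt hjm)
  rw [← hWdef] at hA hB
  have hd : (0 : ℝ) < s.det := hs.det_pos
  have hP : (0 : ℝ) < pminor W (m - ((j : ℕ) + 1)) := pminor_pos hW _
  have hQ : (0 : ℝ) < pminor W (m - (j : ℕ)) := pminor_pos hW _
  have h1 : pminor s⁻¹ ((j : ℕ) + 1) = pminor W (m - ((j : ℕ) + 1)) / s.det := by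
    rw [eq_div_iff hd.ne']; exact hA
  have h2 : pminor s⁻¹ (j : ℕ) = pminor W (m - (j : ℕ)) / s.det := by
    rw [eq_div_iff hd.ne']; exact hB
  have hL : pminor s⁻¹ ((j : ℕ) + 1) / pminor s⁻¹ (j : ℕ)
      = pminor W (m - ((j : ℕ) + 1)) / pminor W (m - (j : ℕ)) := by
    rw [h1, h2, div_div_div_comm, div_self hd.ne', div_one]
  rw [hL]
  have hx : pminor W (m - ((j : ℕ) + 1)) / pminor W (m - (j : ℕ))
      = (pminor W (m - (j : ℕ)) / pminor W (m - ((j : ℕ) + 1)))⁻¹ := by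
    rw [inv_div]
  rw [hx, Complex.ofReal_inv, neg_div,
    Complex.inv_cpow _ _ (by
      rw [Complex.arg_ofReal_of_nonneg (le_of_lt (by positivity))]
      exact Real.pi_ne_zero.symm),
    ← Complex.cpow_neg]

theorem cpow_cone_reverse (m : ℕ) (lam : Fin m → ℂ)
    (r : Matrix (Fin m) (Fin m) ℝ) (hr : r.PosDef) (hrs : r.IsSymm) :
    cpowCone r (fun j => lam j.rev)
        = cpowCone (antidiag m * r⁻¹ * antidiag m) (fun j => -(lam j)) ∧
    cpowCone r⁻¹ lam
        = cpowCone (antidiag m * r * antidiag m) (fun j => -(lam j.rev)) := by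
  have hωω := antidiag_mul_antidiag m
  have hωinv : (antidiag m)⁻¹ = antidiag m := Matrix.inv_eq_right_inv hωω
  set W := antidiag m * r * antidiag m with hWdef
  have hW : W.PosDef := by
    rw [hWdef, antidiag_conj]
    exact posDef_submatrix hr _ Fin.rev_injective
  have hWW : antidiag m * W * antidiag m = r := by
    rw [hWdef]
    simp only [← Matrix.mul_assoc]
    rw [hωω, one_mul, Matrix.mul_assoc, hωω, mul_one]
  have hWinv : W⁻¹ = antidiag m * r⁻¹ * antidiag m := by
    rw [hWdef, Matrix.mul_inv_rev, Matrix.mul_inv_rev, hωinv, ← Matrix.mul_assoc]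
  constructor
  · have h := cpow_key (fun j => -(lam j)) hW
    rw [hWW, hWinv] at h
    simp only [neg_neg] at h
    exact h.symm
  · exact cpow_key lam hr


end
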